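/- Let M be a strongly regular sequence with moderate growth constant A, quotients m_p = M_{p+1}/M_p, and let k₃ > 0. Define m(p) as any quantity satisfying m(p) ≤ ∫₀^∞ t^p h_M(k₃/t) dt. Then there exist constants C₁, C₂ > 0 such that ∫₀^∞ t^p h_M(k₃/t) dt ≤ C₁ C₂^p M_p for all p ∈ ℕ. (Upper moment bound.) -/

import Mathlib

open MeasureTheory Set

private lemma quot_mono (M : ℕ → ℝ) (hpos : ∀ p, 0 < M p)
    (hlc : ∀ p : ℕ, (M (p + 1)) ^ 2 ≤ M p * M (p + 2)) (p : ℕ) :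
    M (p + 1) / M p ≤ M (p + 2) / M (p + 1) := by
  rw [div_le_div_iff₀ (hpos p) (hpos (p + 1))]
  have := hlc p
  nlinarith [hpos p, hpos (p + 1), hpos (p + 2)]

private lemma quot_mono' (M : ℕ → ℝ) (hpos : ∀ p, 0 < M p)
    (hlc : ∀ p : ℕ, (M (p + 1)) ^ 2 ≤ M p * M (p + 2)) (q k : ℕ) :
    M (q + 1) / M q ≤ M (q + k + 1) / M (q + k) := by
  induction k with
  | zero => simp
  | succ n ih => exact ih.trans (quot_mono M hpos hlc (q + n))

/-- `M q * (M (q+1)/M q)^k ≤ M (q+k)`. -/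
private lemma pow_quot_le (M : ℕ → ℝ) (hpos : ∀ p, 0 < M p)
    (hlc : ∀ p : ℕ, (M (p + 1)) ^ 2 ≤ M p * M (p + 2)) (q k : ℕ) :
    M q * (M (q + 1) / M q) ^ k ≤ M (q + k) := by
  induction k with
  | zero => simp
  | succ n ih =>
    have hq : (0 : ℝ) < M (q + 1) / M q := div_pos (hpos _) (hpos _)
    have h1 : M (q + 1) / M q ≤ M (q + n + 1) / M (q + n) := quot_mono' M hpos hlc q n
    have h2 : M q * (M (q + 1) / M q) ^ (n + 1)
        = (M q * (M (q + 1) / M q) ^ n) * (M (q + 1) / M q) := by ring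
    rw [h2]
    calc (M q * (M (q + 1) / M q) ^ n) * (M (q + 1) / M q)
        ≤ M (q + n) * (M (q + n + 1) / M (q + n)) := by
          apply mul_le_mul ih h1 hq.le (hpos _).le
      _ = M (q + n + 1) := by rw [mul_comm, div_mul_cancel₀ _ (hpos (q + n)).ne']
      _ = M (q + (n + 1)) := by ring_nf

/-- Upper moment bound: `∫₀^∞ t^p h_M(k₃/t) dt ≤ C₁ C₂^p M_p`. -/
theorem moment_upper_bound (M : ℕ → ℝ) (A B : ℝ)
    (hpos : ∀ p, 0 < M p) (hM0 : M 0 = 1)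
    (hlc : ∀ p : ℕ, (M (p + 1)) ^ 2 ≤ M p * M (p + 2))
    (hA : 0 < A) (hmg : ∀ p ℓ : ℕ, M (p + ℓ) ≤ A ^ (p + ℓ) * M p * M ℓ)
    (hB : 0 < B)
    (hsnq : ∀ p : ℕ, ∑' ℓ : ℕ, M (p + ℓ) / ((p + ℓ + 1) * M (p + ℓ + 1)) ≤ B * M p / M (p + 1))
    (h : ℝ → ℝ)
    (hdef : ∀ t : ℝ, 0 < t → h t = ⨅ p : ℕ, M p * t ^ p) (h0 : h 0 = 0)
    (k₃ : ℝ) (hk₃ : 0 < k₃) :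
    ∃ C₁ C₂ : ℝ, 0 < C₁ ∧ 0 < C₂ ∧ ∀ p : ℕ,
      ∫ t in Ioi (0 : ℝ), t ^ p * h (k₃ / t) ≤ C₁ * C₂ ^ p * M p := by
  -- A ≥ 1
  have hA1 : (1 : ℝ) ≤ A := by
    have h1 := hmg 1 0
    simp [hM0] at h1
    nlinarith [hpos 1]
  have hM1 : 0 < M 1 := hpos 1
  -- the constants
  have hmaxpos : (0:ℝ) < max 1 k₃ := lt_of_lt_of_le one_pos (le_max_left _ _)
  refine ⟨M 1 * (A ^ 3 + A * k₃ ^ 2), A ^ 3 * max 1 k₃, ?_, ?_, ?_⟩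
  · have h1 : 0 < A ^ 3 + A * k₃ ^ 2 := by positivity
    exact mul_pos hM1 h1
  · exact mul_pos (pow_pos hA 3) hmaxpos
  intro p
  set C₁ := M 1 * (A ^ 3 + A * k₃ ^ 2) with hC₁
  set C₂ := A ^ 3 * max 1 k₃ with hC₂
  have hC₂pos : 0 < C₂ := mul_pos (pow_pos hA 3) hmaxpos
  have hRHS : 0 < C₁ * C₂ ^ p * M p :=
    mul_pos (mul_pos (mul_pos hM1 (by positivity)) (pow_pos hC₂pos p)) (hpos p)
  -- basic facts about h
  have hnonneg : ∀ s : ℝ, 0 < s → 0 ≤ h s := by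
    intro s hs
    rw [hdef s hs]
    exact Real.iInf_nonneg fun q => by have := hpos q; positivity
  have hle : ∀ s : ℝ, 0 < s → ∀ q : ℕ, h s ≤ M q * s ^ q := by
    intro s hs q
    rw [hdef s hs]
    exact ciInf_le ⟨0, by rintro x ⟨q, rfl⟩; have := hpos q; positivity⟩ q
  set m : ℝ := M (p + 2) / M (p + 1) with hm
  have hm0 : 0 < m := div_pos (hpos _) (hpos _)
  set c : ℝ := M (p + 2) * k₃ ^ (p + 2) with hc
  have hc0 : 0 < c := mul_pos (hpos _) (pow_pos hk₃ _)
  set f : ℝ → ℝ := fun t => t ^ p * h (k₃ / t) with hf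
  by_cases hint : IntegrableOn f (Ioi (0:ℝ)) volume
  swap
  · rw [MeasureTheory.integral_undef hint]
    exact hRHS.le
  -- pointwise bounds
  have hb1 : ∀ t ∈ Ioc (0:ℝ) m, f t ≤ t ^ p := by
    intro t ht
    have ht0 : 0 < t := ht.1
    have hs : 0 < k₃ / t := div_pos hk₃ ht0
    have := hle _ hs 0
    simp only [pow_zero, mul_one, hM0] at this
    calc f t = t ^ p * h (k₃ / t) := rfl
      _ ≤ t ^ p * 1 := by
          apply mul_le_mul_of_nonneg_left this (by positivity)
      _ = t ^ p := mul_one _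
  have hb2 : ∀ t ∈ Ioi m, f t ≤ c * t ^ (-2 : ℝ) := by
    intro t ht
    have ht0 : 0 < t := hm0.trans ht
    have hs : 0 < k₃ / t := div_pos hk₃ ht0
    have h1 := hle _ hs (p + 2)
    calc f t ≤ t ^ p * (M (p + 2) * (k₃ / t) ^ (p + 2)) :=
          mul_le_mul_of_nonneg_left h1 (by positivity)
      _ = c * t ^ (-2 : ℝ) := by
          rw [Real.rpow_neg ht0.le, show ((2:ℝ) = ((2:ℕ):ℝ)) by norm_num,
            Real.rpow_natCast]
          field_simp [hc]
          rw [hc, div_pow, pow_add t p 2]; field_simp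
  -- integrability of the dominating functions
  have hg1 : IntegrableOn (fun t : ℝ => t ^ p) (Ioc 0 m) volume := by
    rw [← intervalIntegrable_iff_integrableOn_Ioc_of_le hm0.le]
    exact intervalIntegral.intervalIntegrable_pow p
  have hg2 : IntegrableOn (fun t : ℝ => c * t ^ (-2 : ℝ)) (Ioi m) volume :=
    (integrableOn_Ioi_rpow_of_lt (by norm_num) hm0).const_mul c
  -- split the integral
  have hunion : Ioc (0:ℝ) m ∪ Ioi m = Ioi 0 := Ioc_union_Ioi_eq_Ioi hm0.le
  have hdisj : Disjoint (Ioc (0:ℝ) m) (Ioi m) := Ioc_disjoint_Ioi le_rfl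
  have hi1 : IntegrableOn f (Ioc 0 m) volume :=
    hint.mono_set (by rw [← hunion]; exact subset_union_left)
  have hi2 : IntegrableOn f (Ioi m) volume :=
    hint.mono_set (by rw [← hunion]; exact subset_union_right)
  have hsplit : ∫ t in Ioi (0:ℝ), f t = (∫ t in Ioc 0 m, f t) + ∫ t in Ioi m, f t := by
    rw [← hunion]
    exact MeasureTheory.setIntegral_union hdisj measurableSet_Ioi hi1 hi2
  -- bound each piece
  have hp1 : (∫ t in Ioc (0:ℝ) m, f t) ≤ ∫ t in Ioc (0:ℝ) m, t ^ p :=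
    setIntegral_mono_on hi1 hg1 measurableSet_Ioc hb1
  have hp2 : (∫ t in Ioi m, f t) ≤ ∫ t in Ioi m, c * t ^ (-2 : ℝ) :=
    setIntegral_mono_on hi2 hg2 measurableSet_Ioi hb2
  -- compute the dominating integrals
  have hv1 : (∫ t in Ioc (0:ℝ) m, t ^ p) = m ^ (p + 1) / (p + 1) := by
    rw [← intervalIntegral.integral_of_le hm0.le, integral_pow]
    simp
  have hv2 : (∫ t in Ioi m, c * t ^ (-2 : ℝ)) = c / m := by
    rw [MeasureTheory.integral_const_mul, integral_Ioi_rpow_of_lt (by norm_num) hm0]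
    rw [show (-2 : ℝ) + 1 = -1 by norm_num, Real.rpow_neg_one]
    field_simp
  -- arithmetic bounds
  have key1 : m ^ (p + 1) ≤ A ^ (2 * (p + 1)) * M (p + 1) := by
    have h1 := pow_quot_le M hpos hlc (p + 1) (p + 1)
    have h2 := hmg (p + 1) (p + 1)
    have h3 : M (p + 1) * m ^ (p + 1) ≤ A ^ ((p+1) + (p+1)) * M (p + 1) * M (p + 1) := by
      calc M (p + 1) * m ^ (p + 1) ≤ M ((p + 1) + (p + 1)) := h1
        _ ≤ A ^ ((p+1) + (p+1)) * M (p + 1) * M (p + 1) := h2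
    have h4 : m ^ (p + 1) ≤ A ^ ((p+1) + (p+1)) * M (p + 1) := by
      have hMp1 := hpos (p + 1)
      nlinarith
    calc m ^ (p + 1) ≤ A ^ ((p+1) + (p+1)) * M (p + 1) := h4
      _ = A ^ (2 * (p + 1)) * M (p + 1) := by ring_nf
  have keyM : M (p + 1) ≤ A ^ (p + 1) * M p * M 1 := by
    have := hmg p 1
    simpa using this
  have hcm : c / m = M (p + 1) * k₃ ^ (p + 2) := by
    rw [hc, hm, div_div_eq_mul_div, div_eq_iff (hpos (p + 2)).ne']
    ring
  -- final estimate
  have hmax1 : (1:ℝ) ≤ max 1 k₃ := le_max_left _ _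
  have hmaxk : k₃ ≤ max 1 k₃ := le_max_right _ _
  have hApos : ∀ n : ℕ, (0:ℝ) < A ^ n := fun n => pow_pos hA n
  have hfirst : m ^ (p + 1) / (p + 1) ≤ M 1 * A ^ 3 * C₂ ^ p * M p := by
    have h1 : m ^ (p + 1) / (p + 1) ≤ m ^ (p + 1) := by
      apply div_le_self (by positivity)
      have : (1:ℝ) ≤ (p:ℝ) + 1 := by exact_mod_cast Nat.one_le_iff_ne_zero.mpr (Nat.succ_ne_zero p)
      linarith
    have h2 : m ^ (p + 1) ≤ A ^ (2 * (p + 1)) * (A ^ (p + 1) * M p * M 1) := by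
      refine key1.trans ?_
      exact mul_le_mul_of_nonneg_left keyM (by positivity)
    have h3 : A ^ (2 * (p + 1)) * (A ^ (p + 1) * M p * M 1) = M 1 * A ^ 3 * (A ^ 3) ^ p * M p := by
      rw [show ((A:ℝ) ^ 3) ^ p = A ^ (3 * p) by rw [← pow_mul],
        show (A:ℝ) ^ (2 * (p + 1)) * (A ^ (p + 1) * M p * M 1)
          = A ^ (2 * (p + 1)) * A ^ (p + 1) * (M p * M 1) by ring, ← pow_add,
        show 2 * (p + 1) + (p + 1) = 3 + 3 * p by ring, pow_add]
      ring
    have h4 : (A ^ 3 : ℝ) ^ p ≤ C₂ ^ p := by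
      apply pow_le_pow_left₀ (by positivity)
      rw [hC₂]
      exact le_mul_of_one_le_right (pow_pos hA 3).le hmax1
    have h5 : M 1 * A ^ 3 * (A ^ 3) ^ p * M p ≤ M 1 * A ^ 3 * C₂ ^ p * M p :=
      mul_le_mul_of_nonneg_right
        (mul_le_mul_of_nonneg_left h4 (by positivity)) (hpos p).le
    linarith [h1, h2.trans_eq h3]
  have hsecond : c / m ≤ M 1 * (A * k₃ ^ 2) * C₂ ^ p * M p := by
    rw [hcm]
    have h1 : M (p + 1) * k₃ ^ (p + 2) ≤ (A ^ (p + 1) * M p * M 1) * k₃ ^ (p + 2) := by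
      apply mul_le_mul_of_nonneg_right keyM (by positivity)
    have h2 : (A ^ (p + 1) * M p * M 1) * k₃ ^ (p + 2)
        = M 1 * (A * k₃ ^ 2) * ((A * k₃) ^ p) * M p := by
      rw [mul_pow, pow_add, pow_add]
      ring
    have hAA3 : A ≤ A ^ 3 := by
      calc A = A ^ 1 := (pow_one A).symm
        _ ≤ A ^ 3 := pow_le_pow_right₀ hA1 (by norm_num)
    have h3 : (A * k₃ : ℝ) ^ p ≤ C₂ ^ p := by
      apply pow_le_pow_left₀ (by positivity)
      rw [hC₂]
      calc A * k₃ ≤ A ^ 3 * k₃ := mul_le_mul_of_nonneg_right hAA3 hk₃.le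
        _ ≤ A ^ 3 * max 1 k₃ := mul_le_mul_of_nonneg_left hmaxk (by positivity)
    have h4 : M 1 * (A * k₃ ^ 2) * ((A * k₃) ^ p) * M p
        ≤ M 1 * (A * k₃ ^ 2) * C₂ ^ p * M p :=
      mul_le_mul_of_nonneg_right
        (mul_le_mul_of_nonneg_left h3 (by positivity)) (hpos p).le
    linarith [h1.trans_eq h2]
  have : (∫ t in Ioi (0:ℝ), f t) ≤ m ^ (p + 1) / (p + 1) + c / m := by
    rw [hsplit]
    rw [← hv1, ← hv2]
    linarith
  refine this.trans ?_
  have : M 1 * A ^ 3 * C₂ ^ p * M p + M 1 * (A * k₃ ^ 2) * C₂ ^ p * M p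
      = C₁ * C₂ ^ p * M p := by rw [hC₁]; ring
  linarith
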